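/- In the overalgebra 𝐀 of the second type, with the classes of β indexed so that a₁ ∈ C_m, the relation β̃ = β⋆ ∪ ⋃_{r=1}^{m−1} ⋃_{n=1}^{N} (⋃_{ℓ∈𝒯_n} C_r^ℓ)² is a congruence of 𝐀, and it is the largest congruence θ of 𝐀 satisfying θ∩(B×B) = β (that is, β̃ = β̂). -/
import Mathlib


namespace Overalg

variable {A : Type*}

/-- `θ` is an equivalence relation on the whole type `A`, viewed as a set of pairs. -/
def IsEquivRel (θ : Set (A × A)) : Prop :=
  (∀ x : A, (x, x) ∈ θ) ∧ (∀ x y : A, (x, y) ∈ θ → (y, x) ∈ θ) ∧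
    (∀ x y z : A, (x, y) ∈ θ → (y, z) ∈ θ → (x, z) ∈ θ)

/-- `θ` is an equivalence relation on the subset `B` of `A`, viewed as a set of pairs. -/
def IsEquivOn (B : Set A) (θ : Set (A × A)) : Prop :=
  θ ⊆ B ×ˢ B ∧ (∀ x ∈ B, (x, x) ∈ θ) ∧ (∀ x y : A, (x, y) ∈ θ → (y, x) ∈ θ) ∧
    (∀ x y z : A, (x, y) ∈ θ → (y, z) ∈ θ → (x, z) ∈ θ)

/-- The clone of unary polynomials of the unary algebra `⟨A, F⟩`: the smallest set of
maps `A → A` containing `F`, the identity and all constants, closed under composition. -/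
inductive Pol1 (F : Set (A → A)) : (A → A) → Prop
  | base : ∀ f ∈ F, Pol1 F f
  | id : Pol1 F _root_.id
  | const : ∀ a : A, Pol1 F (fun _ => a)
  | comp : ∀ f g : A → A, Pol1 F f → Pol1 F g → Pol1 F (f ∘ g)

/-- A congruence of the unary algebra `⟨A, F⟩`. -/
def IsCon (F : Set (A → A)) (θ : Set (A × A)) : Prop :=
  IsEquivRel θ ∧ ∀ f ∈ F, ∀ p ∈ θ, (f p.1, f p.2) ∈ θ

end Overalg

namespace Overalg

/-- The data of an *overalgebra of the second type*, built over a finite base algebra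
`𝐁 = ⟨B 0, F⟩` and the congruence `β = Cg^𝐁((a 1, b 1), …, (a (K-1), b (K-1)))`.
The universe is `A = B 0 ∪ B 1 ∪ ⋯ ∪ B (u*K)`, a chain of copies of `B 0` glued at
tie-points as in the paper; `π j : B 0 → B j` are bijections with inverses `σ j`;
`T 1 | ⋯ | T N` is a partition of the multiples of `K` in `{0, …, u*K}`, and the maps
`e j` are the retractions described in the construction. -/
structure OvII (A : Type*) where
  K : ℕ
  u : ℕ
  N : ℕ
  B : ℕ → Set A
  F : Set (A → A)
  a : ℕ → A
  b : ℕ → A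
  π : ℕ → A → A
  σ : ℕ → A → A
  T : ℕ → Set ℕ
  e : ℕ → A → A
  β : Set (A × A)
  hfin : Finite A
  hK : 2 ≤ K
  hu : 1 ≤ u
  /-- `A = B 0 ∪ ⋯ ∪ B (u*K)` -/
  hA : ∀ x : A, ∃ j ≤ u * K, x ∈ B j
  /-- the base operations map `B 0` into itself -/
  hF : ∀ f ∈ F, Set.MapsTo f (B 0) (B 0)
  /-- the generating pairs lie in `B 0` -/
  hab : ∀ i, 1 ≤ i → i ≤ K - 1 → a i ∈ B 0 ∧ b i ∈ B 0
  /-- `π 0` is the identity -/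
  hπ0 : ∀ x : A, π 0 x = x
  /-- `π j` is a bijection of `B 0` onto `B j` -/
  hπ : ∀ j ≤ u * K, Set.BijOn (π j) (B 0) (B j)
  /-- `σ j` inverts `π j` on `B 0` -/
  hσ : ∀ j ≤ u * K, ∀ c ∈ B 0, σ j (π j c) = c
  /-- `β` is the smallest congruence of `𝐁` containing the pairs `(a i, b i)` -/
  hβ : IsLeast {γ : Set (A × A) |
      (IsEquivOn (B 0) γ ∧ ∀ f ∈ F, ∀ p ∈ γ, (f p.1, f p.2) ∈ γ) ∧
      ∀ i, 1 ≤ i → i ≤ K - 1 → (a i, b i) ∈ γ} β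
  /-- adjacent intersections at a multiple of `K`:
  `B ℓ ∩ B (ℓ+1) = {a₁^ℓ} = {a₁^{ℓ+1}}` -/
  hadj0 : ∀ j < u * K, j % K = 0 →
    B j ∩ B (j + 1) = {π j (a 1)} ∧ π j (a 1) = π (j + 1) (a 1)
  /-- adjacent intersections in the middle of a segment:
  `B (ℓ+i) ∩ B (ℓ+i+1) = {b_i^{ℓ+i}} = {a_{i+1}^{ℓ+i+1}}` for `1 ≤ i ≤ K-2` -/
  hadjm : ∀ j < u * K, 1 ≤ j % K → j % K ≤ K - 2 →
    B j ∩ B (j + 1) = {π j (b (j % K))} ∧ π j (b (j % K)) = π (j + 1) (a (j % K + 1))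
  /-- adjacent intersections at the end of a segment:
  `B (ℓ+K-1) ∩ B (ℓ+K) = {b_{K-1}^{ℓ+K-1}} = {a₁^{ℓ+K}}` -/
  hadjl : ∀ j < u * K, j % K = K - 1 →
    B j ∩ B (j + 1) = {π j (b (K - 1))} ∧ π j (b (K - 1)) = π (j + 1) (a 1)
  /-- the triple meets: `B (ℓ-1) ∩ B (ℓ+1) = {a₁^ℓ}` for `ℓ` a positive multiple
  of `K` with `ℓ < u*K` -/
  htriple : ∀ j, 0 < j → j + 1 ≤ u * K → j % K = 0 → B (j - 1) ∩ B (j + 1) = {π j (a 1)}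
  /-- all other intersections are empty -/
  hempty : ∀ i j, i ≤ u * K → j ≤ u * K → i + 2 ≤ j →
    ¬(j = i + 2 ∧ (i + 1) % K = 0) → B i ∩ B j = ∅
  /-- each block `T n` consists of multiples of `K` that are at most `u*K` -/
  hT1 : ∀ n, 1 ≤ n → n ≤ N → T n ⊆ {j : ℕ | j ≤ u * K ∧ K ∣ j}
  /-- the blocks `T 1, …, T N` partition `{0, K, 2K, …, uK}` -/
  hT2 : ∀ j ≤ u * K, K ∣ j → ∃! n, 1 ≤ n ∧ n ≤ N ∧ j ∈ T n
  /-- for `ℓ` a multiple of `K`: `e ℓ` maps `B j` onto `B ℓ` via `S_{j,ℓ}` when `j` is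
  in the same block of the partition as `ℓ` … -/
  heK1 : ∀ n, 1 ≤ n → n ≤ N → ∀ ℓ ∈ T n, ∀ j ∈ T n, ∀ c ∈ B 0, e ℓ (π j c) = π ℓ c
  /-- … and sends everything else to the tie-point `a₁^ℓ` -/
  heK2 : ∀ n, 1 ≤ n → n ≤ N → ∀ ℓ ∈ T n, ∀ x : A, (∀ j ∈ T n, x ∉ B j) →
    e ℓ x = π ℓ (a 1)
  /-- for `j = ℓ + i` with `1 ≤ i < K`: `e j` is the identity on `B j` … -/
  heM1 : ∀ j ≤ u * K, j % K ≠ 0 → ∀ x ∈ B j, e j x = x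
  /-- … maps everything to the left of `B j` to the left tie-point `a_i^j` … -/
  heM2 : ∀ j ≤ u * K, j % K ≠ 0 → ∀ j' < j, ∀ x ∈ B j', x ∉ B j →
    e j x = π j (a (j % K))
  /-- … and everything to the right of `B j` to the right tie-point `b_i^j` -/
  heM3 : ∀ j ≤ u * K, j % K ≠ 0 → ∀ j', j < j' → j' ≤ u * K → ∀ x ∈ B j', x ∉ B j →
    e j x = π j (b (j % K))

namespace OvII

variable {A : Type*} (O : OvII A)

/-- `q i j = S i j ∘ e i`; here `q i 0 = σ i ∘ e i` and `q 0 j = π j ∘ e 0`. -/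
def qi0 (i : ℕ) : A → A := fun x => O.σ i (O.e i x)

/-- `q 0 j = π j ∘ e 0`. -/
def q0j (j : ℕ) : A → A := fun x => O.π j (O.e 0 x)

/-- The operations of the overalgebra:
`F_A = {f ∘ e 0 : f ∈ F} ∪ {q i 0 : 0 ≤ i ≤ uK} ∪ {q 0 j : 1 ≤ j ≤ uK}`. -/
def FA : Set (A → A) :=
  {g | ∃ f ∈ O.F, g = f ∘ O.e 0} ∪ {g | ∃ i ≤ O.u * O.K, g = O.qi0 i} ∪
    {g | ∃ j, 1 ≤ j ∧ j ≤ O.u * O.K ∧ g = O.q0j j}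

/-- A congruence of the base algebra `𝐁 = ⟨B 0, F⟩`. -/
def ConB (θ : Set (A × A)) : Prop :=
  IsEquivOn (O.B 0) θ ∧ ∀ f ∈ O.F, ∀ p ∈ θ, (f p.1, f p.2) ∈ θ

/-- A tie-point `t j` of `B j`: `a₁^j` when `K ∣ j`, and `a_i^j` when `j = ℓ + i`,
`1 ≤ i < K`. -/
def tie (j : ℕ) : A := O.π j (O.a (if j % O.K = 0 then 1 else j % O.K))

/-- `β^j = {(π j x, π j y) : (x, y) ∈ β}`, the copy of `β` on `B j`. -/
def bj (j : ℕ) : Set (A × A) := {p | ∃ q ∈ O.β, p = (O.π j q.1, O.π j q.2)}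

/-- `t j / β^j`, the `β^j`-class of the tie-point of `B j`. -/
def tcls (j : ℕ) : Set A := {x | (O.tie j, x) ∈ O.bj j}

/-- `β⋆ = ⋃_{j=0}^{uK} β^j ∪ (⋃_{j=0}^{uK} t_j/β^j)²`. -/
def bstar : Set (A × A) :=
  {p | ∃ j ≤ O.u * O.K, p ∈ O.bj j} ∪
    {p | (∃ j ≤ O.u * O.K, p.1 ∈ O.tcls j) ∧ (∃ j ≤ O.u * O.K, p.2 ∈ O.tcls j)}

/-- The `θ`-class of `c`. -/
def cls (_O : OvII A) (θ : Set (A × A)) (c : A) : Set A := {x | (c, x) ∈ θ}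

/-- For `c ∈ B 0` with `β`-class `C_r = c/β`, this is `⋃_{ℓ ∈ T n} C_r^ℓ`. -/
def wing (n : ℕ) (c : A) : Set A := ⋃ ℓ ∈ O.T n, O.π ℓ '' O.cls O.β c

/-- `β̃ = β⋆ ∪ ⋃_{r=1}^{m-1} ⋃_{n=1}^{N} (⋃_{ℓ ∈ 𝒯_n} C_r^ℓ)²`, where the classes of
`β` other than the class of `a 1` are parametrized by their elements `c`. -/
def btilde : Set (A × A) :=
  O.bstar ∪
    {p | ∃ n, 1 ≤ n ∧ n ≤ O.N ∧ ∃ c ∈ O.B 0, (c, O.a 1) ∉ O.β ∧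
      p.1 ∈ O.wing n c ∧ p.2 ∈ O.wing n c}

end OvII

end Overalg
namespace Overalg

namespace OvII

variable {A : Type*} (O : OvII A)

lemma hK0 : 0 < O.K := by have := O.hK; omega

lemma bsub : O.β ⊆ (O.B 0) ×ˢ (O.B 0) := O.hβ.1.1.1.1

lemma bmem {p q : A} (h : (p, q) ∈ O.β) : p ∈ O.B 0 ∧ q ∈ O.B 0 :=
  Set.mem_prod.mp (O.bsub h)

lemma brefl {c : A} (hc : c ∈ O.B 0) : (c, c) ∈ O.β := O.hβ.1.1.1.2.1 c hc

lemma bsymm {p q : A} (h : (p, q) ∈ O.β) : (q, p) ∈ O.β := O.hβ.1.1.1.2.2.1 p q h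

lemma btrans {p q r : A} (h1 : (p, q) ∈ O.β) (h2 : (q, r) ∈ O.β) : (p, r) ∈ O.β :=
  O.hβ.1.1.1.2.2.2 p q r h1 h2

lemma bcongr {f : A → A} (hf : f ∈ O.F) {p q : A} (h : (p, q) ∈ O.β) :
    (f p, f q) ∈ O.β := O.hβ.1.1.2 f hf (p, q) h

lemma bgen {i : ℕ} (h1 : 1 ≤ i) (h2 : i ≤ O.K - 1) : (O.a i, O.b i) ∈ O.β :=
  O.hβ.1.2 i h1 h2

lemma a1B : O.a 1 ∈ O.B 0 := (O.hab 1 le_rfl (by have := O.hK; omega)).1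

lemma modlt (j : ℕ) : j % O.K < O.K := Nat.mod_lt _ O.hK0

lemma πmem {j : ℕ} (hj : j ≤ O.u * O.K) {c : A} (hc : c ∈ O.B 0) : O.π j c ∈ O.B j :=
  (O.hπ j hj).mapsTo hc

lemma πinj {j : ℕ} (hj : j ≤ O.u * O.K) {c d : A} (hc : c ∈ O.B 0) (hd : d ∈ O.B 0)
    (h : O.π j c = O.π j d) : c = d := (O.hπ j hj).injOn hc hd h

lemma πsurj {j : ℕ} (hj : j ≤ O.u * O.K) {x : A} (hx : x ∈ O.B j) :
    ∃ c ∈ O.B 0, O.π j c = x := (O.hπ j hj).surjOn hx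

/-- the base point of the tie of `B j` -/
lemma tbB (j : ℕ) : O.a (if j % O.K = 0 then 1 else j % O.K) ∈ O.B 0 := by
  split_ifs with h
  · exact O.a1B
  · exact (O.hab _ (by omega) (by have := O.modlt j; omega)).1

lemma tie_tcls (j : ℕ) : O.tie j ∈ O.tcls j :=
  ⟨(_, _), O.brefl (O.tbB j), rfl⟩

lemma tcls_intro {j : ℕ} {c : A}
    (h : (O.a (if j % O.K = 0 then 1 else j % O.K), c) ∈ O.β) : O.π j c ∈ O.tcls j :=
  ⟨(_, c), h, rfl⟩

lemma tcls_elim {j : ℕ} (hj : j ≤ O.u * O.K) {x : A} (h : x ∈ O.tcls j) :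
    ∃ c ∈ O.B 0, (O.a (if j % O.K = 0 then 1 else j % O.K), c) ∈ O.β ∧ x = O.π j c := by
  obtain ⟨⟨p, q⟩, hpq, heq⟩ := h
  have h1 : O.π j (O.a (if j % O.K = 0 then 1 else j % O.K)) = O.π j p :=
    congrArg Prod.fst heq
  have h2 : x = O.π j q := congrArg Prod.snd heq
  have hp := O.πinj hj (O.tbB j) (O.bmem hpq).1 h1
  exact ⟨q, (O.bmem hpq).2, hp ▸ hpq, h2⟩

lemma tcls_sub {j : ℕ} (hj : j ≤ O.u * O.K) {x : A} (h : x ∈ O.tcls j) : x ∈ O.B j := by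
  obtain ⟨c, hc, -, rfl⟩ := O.tcls_elim hj h
  exact O.πmem hj hc

lemma bj_elim {j : ℕ} {x y : A} (h : (x, y) ∈ O.bj j) :
    ∃ p q, p ∈ O.B 0 ∧ q ∈ O.B 0 ∧ (p, q) ∈ O.β ∧ x = O.π j p ∧ y = O.π j q := by
  obtain ⟨⟨p, q⟩, hpq, heq⟩ := h
  exact ⟨p, q, (O.bmem hpq).1, (O.bmem hpq).2, hpq,
    congrArg Prod.fst heq, congrArg Prod.snd heq⟩

lemma bj_intro {j : ℕ} {p q : A} (h : (p, q) ∈ O.β) : (O.π j p, O.π j q) ∈ O.bj j :=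
  ⟨(p, q), h, rfl⟩

lemma tcls_pair {j : ℕ} (hj : j ≤ O.u * O.K) {x y : A} (hx : x ∈ O.tcls j)
    (hy : y ∈ O.tcls j) : (x, y) ∈ O.bj j := by
  obtain ⟨c, hc, hbc, rfl⟩ := O.tcls_elim hj hx
  obtain ⟨d, hd, hbd, rfl⟩ := O.tcls_elim hj hy
  exact O.bj_intro (O.btrans (O.bsymm hbc) hbd)

lemma bj_symm {j : ℕ} {x y : A} (h : (x, y) ∈ O.bj j) : (y, x) ∈ O.bj j := by
  obtain ⟨p, q, -, -, hpq, rfl, rfl⟩ := O.bj_elim h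
  exact O.bj_intro (O.bsymm hpq)

lemma bj_trans {j : ℕ} (hj : j ≤ O.u * O.K) {x y z : A} (h1 : (x, y) ∈ O.bj j)
    (h2 : (y, z) ∈ O.bj j) : (x, z) ∈ O.bj j := by
  obtain ⟨p, q, hp, hq, hpq, rfl, rfl⟩ := O.bj_elim h1
  obtain ⟨p', q', hp', hq', hpq', heq, rfl⟩ := O.bj_elim h2
  have := O.πinj hj hq hp' heq
  exact O.bj_intro (O.btrans hpq (this ▸ hpq'))

lemma bj_tcls {j : ℕ} (hj : j ≤ O.u * O.K) {x y : A} (h : (x, y) ∈ O.bj j)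
    (hy : y ∈ O.tcls j) : x ∈ O.tcls j :=
  O.bj_trans hj hy (O.bj_symm h)

lemma bj_tcls' {j : ℕ} (hj : j ≤ O.u * O.K) {x y : A} (h : (x, y) ∈ O.bj j)
    (hx : x ∈ O.tcls j) : y ∈ O.tcls j :=
  O.bj_trans hj hx h

lemma bj0 : O.bj 0 = O.β := by
  ext ⟨x, y⟩
  constructor
  · rintro ⟨⟨p, q⟩, hpq, heq⟩
    have : (x, y) = (p, q) := by
      rw [heq, O.hπ0, O.hπ0]
    rw [this]; exact hpq
  · intro h
    exact ⟨(x, y), h, by rw [O.hπ0, O.hπ0]⟩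

lemma mod_succ_zero {i : ℕ} (h : i % O.K = 0) : (i + 1) % O.K = 1 := by
  have hK := O.hK
  rw [Nat.add_mod, h, Nat.zero_add, Nat.mod_mod_of_dvd _ dvd_rfl]
  exact Nat.mod_eq_of_lt (by omega)

lemma mod_succ_mid {i : ℕ} (h : i % O.K + 1 < O.K) : (i + 1) % O.K = i % O.K + 1 := by
  rw [Nat.add_mod, Nat.mod_eq_of_lt (show 1 < O.K by have := O.hK; omega),
    Nat.mod_eq_of_lt h]

lemma mod_succ_last {i : ℕ} (h : i % O.K = O.K - 1) : (i + 1) % O.K = 0 := by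
  have hK := O.hK
  rw [Nat.add_mod, Nat.mod_eq_of_lt (show 1 < O.K by omega), h]
  have : O.K - 1 + 1 = O.K := by omega
  rw [this, Nat.mod_self]

lemma mod_pred_last {i : ℕ} (h : (i + 1) % O.K = 0) : i % O.K = O.K - 1 := by
  have h1 := O.modlt i
  rcases Nat.lt_or_ge (i % O.K + 1) O.K with h2 | h2
  · have := O.mod_succ_mid h2; omega
  · omega

lemma intersect_lt {i j : ℕ} (hlt : i < j) (hi : i ≤ O.u * O.K) (hj : j ≤ O.u * O.K)
    {x : A} (hxi : x ∈ O.B i) (hxj : x ∈ O.B j) :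
    (x ∈ O.tcls i ∧ (i % O.K = 0 → x = O.π i (O.a 1))) ∧
    (x ∈ O.tcls j ∧ (j % O.K = 0 → x = O.π j (O.a 1))) := by
  have hK := O.hK
  by_cases h1 : j = i + 1
  · subst h1
    have hiu : i < O.u * O.K := by omega
    have hm := O.modlt i
    rcases Nat.lt_trichotomy (i % O.K) 1 with hc | hc | hc
    · -- i % K = 0
      have hc0 : i % O.K = 0 := by omega
      obtain ⟨hint, heq⟩ := O.hadj0 i hiu hc0
      have hx : x = O.π i (O.a 1) := by
        have h := Set.mem_inter hxi hxj; rw [hint] at h; exact h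
      have hmod1 : (i + 1) % O.K = 1 := O.mod_succ_zero hc0
      constructor
      · refine ⟨?_, fun _ => hx⟩
        have : O.tie i = O.π i (O.a 1) := by
          unfold tie; rw [if_pos hc0]
        rw [hx, ← this]; exact O.tie_tcls i
      · refine ⟨?_, fun h => absurd h (by omega)⟩
        have : O.tie (i + 1) = O.π (i + 1) (O.a 1) := by
          unfold tie; rw [if_neg (by omega), hmod1]
        rw [hx, heq, ← this]; exact O.tie_tcls (i + 1)
    · -- impossible below; handled in hc cases: hc : i % K = 1 falls into middle or last
      -- treat together with hc > 1 via general middle/last split below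
      rcases Nat.lt_or_ge (i % O.K) (O.K - 1) with hc2 | hc2
      · obtain ⟨hint, heq⟩ := O.hadjm i hiu (by omega) (by omega)
        have hx : x = O.π i (O.b (i % O.K)) := by
          have h := Set.mem_inter hxi hxj; rw [hint] at h; exact h
        have hmod1 : (i + 1) % O.K = i % O.K + 1 := O.mod_succ_mid (by omega)
        constructor
        · refine ⟨?_, fun h => absurd h (by omega)⟩
          rw [hx]
          exact O.tcls_intro (by rw [if_neg (by omega)]; exact O.bgen (by omega) (by omega))
        · refine ⟨?_, fun h => absurd h (by omega)⟩
          have : O.tie (i + 1) = O.π (i + 1) (O.a (i % O.K + 1)) := by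
            unfold tie; rw [if_neg (by omega), hmod1]
          rw [hx, heq, ← this]; exact O.tie_tcls (i + 1)
      · have hcl : i % O.K = O.K - 1 := by omega
        obtain ⟨hint, heq⟩ := O.hadjl i hiu hcl
        have hx : x = O.π i (O.b (O.K - 1)) := by
          have h := Set.mem_inter hxi hxj; rw [hint] at h; exact h
        have hmod1 : (i + 1) % O.K = 0 := O.mod_succ_last hcl
        constructor
        · refine ⟨?_, fun h => absurd h (by omega)⟩
          rw [hx]
          exact O.tcls_intro (by rw [if_neg (by omega), hcl]; exact O.bgen (by omega) le_rfl)
        · have : O.tie (i + 1) = O.π (i + 1) (O.a 1) := by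
            unfold tie; rw [if_pos hmod1]
          refine ⟨?_, fun _ => by rw [hx, heq]⟩
          rw [hx, heq, ← this]; exact O.tie_tcls (i + 1)
    · -- same as above: i % K ≥ 2
      rcases Nat.lt_or_ge (i % O.K) (O.K - 1) with hc2 | hc2
      · obtain ⟨hint, heq⟩ := O.hadjm i hiu (by omega) (by omega)
        have hx : x = O.π i (O.b (i % O.K)) := by
          have h := Set.mem_inter hxi hxj; rw [hint] at h; exact h
        have hmod1 : (i + 1) % O.K = i % O.K + 1 := O.mod_succ_mid (by omega)
        constructor
        · refine ⟨?_, fun h => absurd h (by omega)⟩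
          rw [hx]
          exact O.tcls_intro (by rw [if_neg (by omega)]; exact O.bgen (by omega) (by omega))
        · refine ⟨?_, fun h => absurd h (by omega)⟩
          have : O.tie (i + 1) = O.π (i + 1) (O.a (i % O.K + 1)) := by
            unfold tie; rw [if_neg (by omega), hmod1]
          rw [hx, heq, ← this]; exact O.tie_tcls (i + 1)
      · have hcl : i % O.K = O.K - 1 := by omega
        obtain ⟨hint, heq⟩ := O.hadjl i hiu hcl
        have hx : x = O.π i (O.b (O.K - 1)) := by
          have h := Set.mem_inter hxi hxj; rw [hint] at h; exact h
        have hmod1 : (i + 1) % O.K = 0 := O.mod_succ_last hcl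
        constructor
        · refine ⟨?_, fun h => absurd h (by omega)⟩
          rw [hx]
          exact O.tcls_intro (by rw [if_neg (by omega), hcl]; exact O.bgen (by omega) le_rfl)
        · have : O.tie (i + 1) = O.π (i + 1) (O.a 1) := by
            unfold tie; rw [if_pos hmod1]
          refine ⟨?_, fun _ => by rw [hx, heq]⟩
          rw [hx, heq, ← this]; exact O.tie_tcls (i + 1)
  · by_cases h2 : j = i + 2 ∧ (i + 1) % O.K = 0
    · obtain ⟨rfl, hmod⟩ := h2
      have htrip := O.htriple (i + 1) (by omega) (by omega) hmod
      rw [show i + 1 - 1 = i from by omega] at htrip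
      have hx : x = O.π (i + 1) (O.a 1) := by
        have h := Set.mem_inter hxi hxj; rw [htrip] at h; exact h
      have hcl : i % O.K = O.K - 1 := O.mod_pred_last hmod
      have hiu : i < O.u * O.K := by omega
      obtain ⟨-, heql⟩ := O.hadjl i hiu hcl
      obtain ⟨-, heq0⟩ := O.hadj0 (i + 1) (by omega) hmod
      have hmod2 : (i + 2) % O.K = 1 := by
        have := O.mod_succ_zero hmod
        simpa [show i + 1 + 1 = i + 2 from rfl] using this
      constructor
      · refine ⟨?_, fun h => absurd h (by omega)⟩
        rw [hx, ← heql]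
        exact O.tcls_intro (by rw [if_neg (by omega), hcl]; exact O.bgen (by omega) le_rfl)
      · refine ⟨?_, fun h => absurd h (by omega)⟩
        have htie : O.tie (i + 2) = O.π (i + 2) (O.a 1) := by
          unfold tie; rw [if_neg (show ¬(i + 2) % O.K = 0 by omega), hmod2]
        have heq0' : O.π (i + 1) (O.a 1) = O.π (i + 2) (O.a 1) := heq0
        rw [hx, heq0', ← htie]; exact O.tie_tcls (i + 2)
    · have := O.hempty i j hi hj (by omega) h2
      exact absurd (this ▸ Set.mem_inter hxi hxj) (Set.notMem_empty x)

lemma intersect {i j : ℕ} (hi : i ≤ O.u * O.K) (hj : j ≤ O.u * O.K) (hij : i ≠ j)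
    {x : A} (hxi : x ∈ O.B i) (hxj : x ∈ O.B j) :
    x ∈ O.tcls i ∧ (i % O.K = 0 → x = O.π i (O.a 1)) := by
  rcases Nat.lt_or_ge i j with h | h
  · exact (O.intersect_lt h hi hj hxi hxj).1
  · exact (O.intersect_lt (by omega) hj hi hxj hxi).2

lemma TnK {n : ℕ} (hn1 : 1 ≤ n) (hn2 : n ≤ O.N) {ℓ : ℕ} (hℓ : ℓ ∈ O.T n) :
    ℓ ≤ O.u * O.K ∧ ℓ % O.K = 0 := by
  have h := O.hT1 n hn1 hn2 hℓ
  exact ⟨h.1, Nat.mod_eq_zero_of_dvd h.2⟩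

lemma eM_out {i : ℕ} (hi : i ≤ O.u * O.K) (him : i % O.K ≠ 0) {j : ℕ}
    (hj : j ≤ O.u * O.K) {x : A} (hxj : x ∈ O.B j) (hxi : x ∉ O.B i) :
    O.e i x = O.π i (O.a (i % O.K)) ∨ O.e i x = O.π i (O.b (i % O.K)) := by
  have hne : j ≠ i := fun h => hxi (h ▸ hxj)
  rcases Nat.lt_or_ge j i with h | h
  · exact Or.inl (O.heM2 i hi him j h x hxj hxi)
  · exact Or.inr (O.heM3 i hi him j (by omega) hj x hxj hxi)

lemma tclsMa {i : ℕ} (him : i % O.K ≠ 0) : O.π i (O.a (i % O.K)) ∈ O.tcls i := by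
  have : O.tie i = O.π i (O.a (i % O.K)) := by unfold tie; rw [if_neg him]
  rw [← this]; exact O.tie_tcls i

lemma tclsMb {i : ℕ} (him : i % O.K ≠ 0) : O.π i (O.b (i % O.K)) ∈ O.tcls i := by
  refine O.tcls_intro ?_
  rw [if_neg him]
  exact O.bgen (by omega) (by have := O.modlt i; omega)

lemma eM_tcls {i : ℕ} (hi : i ≤ O.u * O.K) (him : i % O.K ≠ 0) {j : ℕ}
    (hj : j ≤ O.u * O.K) (hne : j ≠ i) {x : A} (hxj : x ∈ O.B j) :
    O.e i x ∈ O.tcls i := by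
  by_cases hxi : x ∈ O.B i
  · rw [O.heM1 i hi him x hxi]
    exact (O.intersect hi hj (fun h => hne h.symm) hxi hxj).1
  · rcases O.eM_out hi him hj hxj hxi with h | h
    · rw [h]; exact O.tclsMa him
    · rw [h]; exact O.tclsMb him

lemma eK_out {n : ℕ} (hn1 : 1 ≤ n) (hn2 : n ≤ O.N) {ℓ : ℕ} (hℓ : ℓ ∈ O.T n) {j : ℕ}
    (hj : j ≤ O.u * O.K) (hjn : j ∉ O.T n) {x : A} (hxj : x ∈ O.B j) :
    O.e ℓ x = O.π ℓ (O.a 1) := by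
  by_cases h : ∀ j'' ∈ O.T n, x ∉ O.B j''
  · exact O.heK2 n hn1 hn2 ℓ hℓ x h
  · push_neg at h
    obtain ⟨j'', hj''n, hxj''⟩ := h
    obtain ⟨hj''u, hj''m⟩ := O.TnK hn1 hn2 hj''n
    have hne : j'' ≠ j := fun h => hjn (h ▸ hj''n)
    have hx : x = O.π j'' (O.a 1) :=
      (O.intersect hj''u hj hne hxj'' hxj).2 hj''m
    rw [hx, O.heK1 n hn1 hn2 ℓ hℓ j'' hj''n (O.a 1) O.a1B]

lemma mem_wing {n : ℕ} {c x : A} :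
    x ∈ O.wing n c ↔ ∃ ℓ ∈ O.T n, ∃ p, (c, p) ∈ O.β ∧ O.π ℓ p = x := by
  simp only [wing, cls, Set.mem_iUnion, Set.mem_image, Set.mem_setOf_eq, exists_prop]

lemma wing_block {n : ℕ} (hn1 : 1 ≤ n) (hn2 : n ≤ O.N) {c : A}
    (hca1 : (c, O.a 1) ∉ O.β) {x : A} (hx : x ∈ O.wing n c) {j : ℕ}
    (hj : j ≤ O.u * O.K) (hxj : x ∈ O.B j) :
    j ∈ O.T n ∧ ∃ p ∈ O.B 0, (c, p) ∈ O.β ∧ x = O.π j p := by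
  obtain ⟨ℓ, hℓ, p, hcp, rfl⟩ := O.mem_wing.mp hx
  have hpB : p ∈ O.B 0 := (O.bmem hcp).2
  obtain ⟨hℓu, hℓm⟩ := O.TnK hn1 hn2 hℓ
  by_cases hje : j = ℓ
  · subst hje; exact ⟨hℓ, p, hpB, hcp, rfl⟩
  · exfalso
    have hxℓ : O.π ℓ p ∈ O.B ℓ := O.πmem hℓu hpB
    have hx1 : O.π ℓ p = O.π ℓ (O.a 1) :=
      (O.intersect hℓu hj (fun h => hje h.symm) hxℓ hxj).2 hℓm
    have : p = O.a 1 := O.πinj hℓu hpB O.a1B hx1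
    exact hca1 (this ▸ hcp)

lemma wing_not_tcls {n : ℕ} (hn1 : 1 ≤ n) (hn2 : n ≤ O.N) {c : A}
    (hca1 : (c, O.a 1) ∉ O.β) {x : A} (hx : x ∈ O.wing n c) {j : ℕ}
    (hj : j ≤ O.u * O.K) (ht : x ∈ O.tcls j) : False := by
  have hxB : x ∈ O.B j := O.tcls_sub hj ht
  obtain ⟨hjn, p, hpB, hcp, hxp⟩ := O.wing_block hn1 hn2 hca1 hx hj hxB
  obtain ⟨q, hqB, hbq, hxq⟩ := O.tcls_elim hj ht
  have hjm : j % O.K = 0 := (O.TnK hn1 hn2 hjn).2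
  rw [if_pos hjm] at hbq
  have : p = q := O.πinj hj hpB hqB (hxp ▸ hxq)
  exact hca1 (O.btrans hcp (O.bsymm (this ▸ hbq)))

lemma e_self {j : ℕ} (hj : j ≤ O.u * O.K) {x : A} (hx : x ∈ O.B j) : O.e j x = x := by
  by_cases hm : j % O.K = 0
  · obtain ⟨n, ⟨hn1, hn2, hjn⟩, -⟩ := O.hT2 j hj (Nat.dvd_of_mod_eq_zero hm)
    obtain ⟨c, hc, rfl⟩ := O.πsurj hj hx
    rw [O.heK1 n hn1 hn2 j hjn j hjn c hc]
  · exact O.heM1 j hj hm x hx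

lemma btilde_cases {x y : A} (h : (x, y) ∈ O.btilde) :
    (∃ j ≤ O.u * O.K, (x, y) ∈ O.bj j) ∨
    ((∃ j ≤ O.u * O.K, x ∈ O.tcls j) ∧ (∃ j ≤ O.u * O.K, y ∈ O.tcls j)) ∨
    (∃ n, 1 ≤ n ∧ n ≤ O.N ∧ ∃ c ∈ O.B 0, (c, O.a 1) ∉ O.β ∧
      x ∈ O.wing n c ∧ y ∈ O.wing n c) := by
  simp only [btilde, bstar, Set.mem_union, Set.mem_setOf_eq] at h
  rcases h with (h | h) | h
  · exact Or.inl h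
  · exact Or.inr (Or.inl h)
  · exact Or.inr (Or.inr h)

lemma E_main {i : ℕ} (hi : i ≤ O.u * O.K) {x y : A} (h : (x, y) ∈ O.btilde) :
    (O.e i x, O.e i y) ∈ O.bj i := by
  by_cases him : i % O.K = 0
  · obtain ⟨n, ⟨hn1, hn2, hin⟩, -⟩ := O.hT2 i hi (Nat.dvd_of_mod_eq_zero him)
    have htbi : O.tie i = O.π i (O.a 1) := by unfold tie; rw [if_pos him]
    rcases O.btilde_cases h with ⟨j, hj, hbj⟩ | ⟨⟨j₁, hj₁, hx⟩, j₂, hj₂, hy⟩ |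
      ⟨n', hn'1, hn'2, c, hcB, hca1, hxw, hyw⟩
    · obtain ⟨p, q, hp, hq, hpq, rfl, rfl⟩ := O.bj_elim hbj
      by_cases hjn : j ∈ O.T n
      · rw [O.heK1 n hn1 hn2 i hin j hjn p hp, O.heK1 n hn1 hn2 i hin j hjn q hq]
        exact O.bj_intro hpq
      · rw [O.eK_out hn1 hn2 hin hj hjn (O.πmem hj hp),
            O.eK_out hn1 hn2 hin hj hjn (O.πmem hj hq)]
        exact O.bj_intro (O.brefl O.a1B)
    · have key : ∀ (z : A) (j' : ℕ), j' ≤ O.u * O.K → z ∈ O.tcls j' →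
          O.e i z ∈ O.tcls i := by
        intro z j' hj' hz
        obtain ⟨cz, hczB, hbz, rfl⟩ := O.tcls_elim hj' hz
        by_cases hj'n : j' ∈ O.T n
        · rw [O.heK1 n hn1 hn2 i hin j' hj'n cz hczB]
          refine O.tcls_intro ?_
          rw [if_pos him]
          rw [if_pos (O.TnK hn1 hn2 hj'n).2] at hbz
          exact hbz
        · rw [O.eK_out hn1 hn2 hin hj' hj'n (O.πmem hj' hczB), ← htbi]
          exact O.tie_tcls i
      exact O.tcls_pair hi (key x j₁ hj₁ hx) (key y j₂ hj₂ hy)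
    · by_cases hnn : n' = n
      · subst hnn
        obtain ⟨ℓ₁, hℓ₁, p, hcp, rfl⟩ := O.mem_wing.mp hxw
        obtain ⟨ℓ₂, hℓ₂, q, hcq, rfl⟩ := O.mem_wing.mp hyw
        rw [O.heK1 n' hn'1 hn'2 i hin ℓ₁ hℓ₁ p (O.bmem hcp).2,
            O.heK1 n' hn'1 hn'2 i hin ℓ₂ hℓ₂ q (O.bmem hcq).2]
        exact O.bj_intro (O.btrans (O.bsymm hcp) hcq)
      · have key : ∀ z : A, z ∈ O.wing n' c → O.e i z = O.π i (O.a 1) := by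
          intro z hz
          have hall : ∀ j'' ∈ O.T n, z ∉ O.B j'' := by
            intro j'' hj'' hzB
            have hj''u := (O.TnK hn1 hn2 hj'').1
            have hmem := (O.wing_block hn'1 hn'2 hca1 hz hj''u hzB).1
            obtain ⟨m, -, hm⟩ := O.hT2 j'' hj''u (O.hT1 n hn1 hn2 hj'').2
            exact hnn ((hm n' ⟨hn'1, hn'2, hmem⟩).trans (hm n ⟨hn1, hn2, hj''⟩).symm)
          exact O.heK2 n hn1 hn2 i hin z hall
        rw [key x hxw, key y hyw]
        exact O.bj_intro (O.brefl O.a1B)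
  · rcases O.btilde_cases h with ⟨j, hj, hbj⟩ | ⟨⟨j₁, hj₁, hx⟩, j₂, hj₂, hy⟩ |
      ⟨n', hn'1, hn'2, c, hcB, hca1, hxw, hyw⟩
    · by_cases hji : j = i
      · subst hji
        obtain ⟨p, q, hp, hq, hpq, rfl, rfl⟩ := O.bj_elim hbj
        rw [O.heM1 j hj him _ (O.πmem hj hp), O.heM1 j hj him _ (O.πmem hj hq)]
        exact O.bj_intro hpq
      · obtain ⟨p, q, hp, hq, hpq, rfl, rfl⟩ := O.bj_elim hbj
        exact O.tcls_pair hi (O.eM_tcls hi him hj hji (O.πmem hj hp))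
          (O.eM_tcls hi him hj hji (O.πmem hj hq))
    · have key : ∀ (z : A) (j' : ℕ), j' ≤ O.u * O.K → z ∈ O.tcls j' →
          O.e i z ∈ O.tcls i := by
        intro z j' hj' hz
        by_cases hji : j' = i
        · subst hji
          rw [O.heM1 j' hj' him z (O.tcls_sub hj' hz)]
          exact hz
        · exact O.eM_tcls hi him hj' hji (O.tcls_sub hj' hz)
      exact O.tcls_pair hi (key x j₁ hj₁ hx) (key y j₂ hj₂ hy)
    · have key : ∀ z : A, z ∈ O.wing n' c → O.e i z ∈ O.tcls i := by
        intro z hz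
        obtain ⟨ℓ, hℓ, p, hcp, rfl⟩ := O.mem_wing.mp hz
        obtain ⟨hℓu, hℓm⟩ := O.TnK hn'1 hn'2 hℓ
        have hne : ℓ ≠ i := fun h => him (h ▸ hℓm)
        exact O.eM_tcls hi him hℓu hne (O.πmem hℓu (O.bmem hcp).2)
      exact O.tcls_pair hi (key x hxw) (key y hyw)

lemma btilde_bj {j : ℕ} (hj : j ≤ O.u * O.K) {x y : A} (h : (x, y) ∈ O.bj j) :
    (x, y) ∈ O.btilde := Or.inl (Or.inl ⟨j, hj, h⟩)

lemma btilde_tcls {j₁ j₂ : ℕ} (hj₁ : j₁ ≤ O.u * O.K) (hj₂ : j₂ ≤ O.u * O.K) {x y : A}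
    (hx : x ∈ O.tcls j₁) (hy : y ∈ O.tcls j₂) : (x, y) ∈ O.btilde :=
  Or.inl (Or.inr ⟨⟨j₁, hj₁, hx⟩, ⟨j₂, hj₂, hy⟩⟩)

lemma btilde_wing {n : ℕ} (hn1 : 1 ≤ n) (hn2 : n ≤ O.N) {c : A} (hcB : c ∈ O.B 0)
    (hca1 : (c, O.a 1) ∉ O.β) {x y : A} (hx : x ∈ O.wing n c) (hy : y ∈ O.wing n c) :
    (x, y) ∈ O.btilde := Or.inr ⟨n, hn1, hn2, c, hcB, hca1, hx, hy⟩

lemma btilde_refl (x : A) : (x, x) ∈ O.btilde := by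
  obtain ⟨j, hj, hx⟩ := O.hA x
  obtain ⟨c, hc, rfl⟩ := O.πsurj hj hx
  exact O.btilde_bj hj (O.bj_intro (O.brefl hc))

lemma btilde_symm {x y : A} (h : (x, y) ∈ O.btilde) : (y, x) ∈ O.btilde := by
  rcases O.btilde_cases h with ⟨j, hj, hbj⟩ | ⟨⟨j₁, hj₁, hx⟩, j₂, hj₂, hy⟩ |
    ⟨n, hn1, hn2, c, hcB, hca1, hxw, hyw⟩
  · exact O.btilde_bj hj (O.bj_symm hbj)
  · exact O.btilde_tcls hj₂ hj₁ hy hx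
  · exact O.btilde_wing hn1 hn2 hcB hca1 hyw hxw

/-- from `(x,y) ∈ bj j` and `y ∈ tcls j'` conclude `x ∈ tcls j` -/
lemma bj_tcls_trans {j j' : ℕ} (hj : j ≤ O.u * O.K) (hj' : j' ≤ O.u * O.K) {x y : A}
    (h : (x, y) ∈ O.bj j) (hy : y ∈ O.tcls j') : x ∈ O.tcls j := by
  by_cases hje : j' = j
  · exact O.bj_tcls hj h (hje ▸ hy)
  · obtain ⟨p, q, hp, hq, hpq, rfl, rfl⟩ := O.bj_elim h
    have hyB : O.π j q ∈ O.B j := O.πmem hj hq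
    have hyB' : O.π j q ∈ O.B j' := O.tcls_sub hj' hy
    have : O.π j q ∈ O.tcls j := (O.intersect hj hj' (fun h => hje h.symm) hyB hyB').1
    exact O.bj_tcls hj (O.bj_intro hpq) this

lemma btilde_trans {x y z : A} (h1 : (x, y) ∈ O.btilde) (h2 : (y, z) ∈ O.btilde) :
    (x, z) ∈ O.btilde := by
  rcases O.btilde_cases h1 with ⟨j, hj, hbj⟩ | ⟨⟨j₁, hj₁, hx⟩, j₂, hj₂, hy⟩ |
    ⟨n, hn1, hn2, c, hcB, hca1, hxw, hyw⟩
  · rcases O.btilde_cases h2 with ⟨j', hj', hbj'⟩ | ⟨⟨j₁', hj₁', hy'⟩, j₂', hj₂', hz'⟩ |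
      ⟨n', hn'1, hn'2, c', hcB', hca1', hyw', hzw'⟩
    · -- P1, P1
      by_cases hje : j = j'
      · exact O.btilde_bj hj (O.bj_trans hj hbj (hje ▸ hbj'))
      · obtain ⟨p, q, hp, hq, hpq, rfl, hy⟩ := O.bj_elim hbj
        obtain ⟨p', q', hp', hq', hpq', hy', rfl⟩ := O.bj_elim hbj'
        have hyB : y ∈ O.B j := hy ▸ O.πmem hj hq
        have hyB' : y ∈ O.B j' := hy' ▸ O.πmem hj' hp'
        obtain ⟨hyt, -⟩ := O.intersect hj hj' hje hyB hyB'
        obtain ⟨hyt', -⟩ := O.intersect hj' hj (fun h => hje h.symm) hyB' hyB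
        exact O.btilde_tcls hj hj' (O.bj_tcls hj (hy ▸ O.bj_intro hpq) hyt)
          (O.bj_tcls' hj' (hy' ▸ O.bj_intro hpq') hyt')
    · -- P1, P2
      exact O.btilde_tcls hj hj₂' (O.bj_tcls_trans hj hj₁' hbj hy') hz'
    · -- P1, P3
      obtain ⟨p, q, hp, hq, hpq, rfl, hy⟩ := O.bj_elim hbj
      have hyB : y ∈ O.B j := hy ▸ O.πmem hj hq
      obtain ⟨hjn, p', hp'B, hcp', hyp'⟩ := O.wing_block hn'1 hn'2 hca1' hyw' hj hyB
      have hqp' : q = p' := O.πinj hj hq hp'B (hy ▸ hyp')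
      exact O.btilde_wing hn'1 hn'2 hcB' hca1'
        (O.mem_wing.mpr ⟨j, hjn, p, O.btrans hcp' (hqp' ▸ O.bsymm hpq), rfl⟩) hzw'
  · rcases O.btilde_cases h2 with ⟨j', hj', hbj'⟩ | ⟨⟨j₁', hj₁', hy'⟩, j₂', hj₂', hz'⟩ |
      ⟨n', hn'1, hn'2, c', hcB', hca1', hyw', hzw'⟩
    · -- P2, P1
      have hz : z ∈ O.tcls j' := by
        have hyt : y ∈ O.tcls j' := by
          by_cases hje : j₂ = j'
          · exact hje ▸ hy
          · obtain ⟨p', q', hp', hq', hpq', hy', rfl⟩ := O.bj_elim hbj'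
            have hyB' : y ∈ O.B j' := hy' ▸ O.πmem hj' hp'
            exact (O.intersect hj' hj₂ (fun h => hje h.symm) hyB' (O.tcls_sub hj₂ hy)).1
        exact O.bj_tcls' hj' hbj' hyt
      exact O.btilde_tcls hj₁ hj' hx hz
    · -- P2, P2
      exact O.btilde_tcls hj₁ hj₂' hx hz'
    · -- P2, P3
      exact absurd (O.wing_not_tcls hn'1 hn'2 hca1' hyw' hj₂ hy) id
  · rcases O.btilde_cases h2 with ⟨j', hj', hbj'⟩ | ⟨⟨j₁', hj₁', hy'⟩, j₂', hj₂', hz'⟩ |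
      ⟨n', hn'1, hn'2, c', hcB', hca1', hyw', hzw'⟩
    · -- P3, P1
      obtain ⟨p', q', hp', hq', hpq', hy', rfl⟩ := O.bj_elim hbj'
      have hyB : y ∈ O.B j' := hy' ▸ O.πmem hj' hp'
      obtain ⟨hjn, p, hpB, hcp, hyp⟩ := O.wing_block hn1 hn2 hca1 hyw hj' hyB
      have hq : p' = p := O.πinj hj' hp' hpB (hy' ▸ hyp)
      exact O.btilde_wing hn1 hn2 hcB hca1 hxw
        (O.mem_wing.mpr ⟨j', hjn, q', O.btrans (hq ▸ hcp) (hq ▸ hpq'), rfl⟩)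
    · -- P3, P2
      exact absurd (O.wing_not_tcls hn1 hn2 hca1 hyw hj₁' hy') id
    · -- P3, P3
      obtain ⟨ℓ, hℓ, q, hcq, hyq⟩ := O.mem_wing.mp hyw
      obtain ⟨hℓu, hℓm⟩ := O.TnK hn1 hn2 hℓ
      have hyB : y ∈ O.B ℓ := hyq ▸ O.πmem hℓu (O.bmem hcq).2
      obtain ⟨hℓn', q', hq'B, hcq', hyq'⟩ := O.wing_block hn'1 hn'2 hca1' hyw' hℓu hyB
      have hqq : q = q' := O.πinj hℓu (O.bmem hcq).2 hq'B (hyq ▸ hyq').symm.symm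
      have hcc' : (c, c') ∈ O.β := O.btrans hcq (hqq ▸ O.bsymm hcq')
      have hzw : z ∈ O.wing n c := by
        obtain ⟨ℓ₃, hℓ₃, r, hc'r, hzr⟩ := O.mem_wing.mp hzw'
        obtain ⟨m, -, hm⟩ := O.hT2 ℓ hℓu (Nat.dvd_of_mod_eq_zero hℓm)
        have hnn' : n = n' := (hm n ⟨hn1, hn2, hℓ⟩).trans (hm n' ⟨hn'1, hn'2, hℓn'⟩).symm
        exact O.mem_wing.mpr ⟨ℓ₃, hnn' ▸ hℓ₃, r, O.btrans hcc' hc'r, hzr⟩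
      exact O.btilde_wing hn1 hn2 hcB hca1 hxw hzw

lemma btilde_trace : O.btilde ∩ (O.B 0 ×ˢ O.B 0) = O.β := by
  have h0u : (0 : ℕ) ≤ O.u * O.K := Nat.zero_le _
  apply Set.Subset.antisymm
  · rintro ⟨x, y⟩ ⟨hbt, hxy⟩
    obtain ⟨hx0, hy0⟩ := Set.mem_prod.mp hxy
    rcases O.btilde_cases hbt with ⟨j, hj, hbj⟩ | ⟨⟨j₁, hj₁, hx⟩, j₂, hj₂, hy⟩ |
      ⟨n, hn1, hn2, c, hcB, hca1, hxw, hyw⟩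
    · by_cases hje : j = 0
      · subst hje; rw [← O.bj0]; exact hbj
      · obtain ⟨p, q, hp, hq, hpq, rfl, rfl⟩ := O.bj_elim hbj
        have hxt : O.π j p ∈ O.tcls 0 :=
          (O.intersect h0u hj (fun h => hje h.symm) hx0 (O.πmem hj hp)).1
        have hyt : O.π j q ∈ O.tcls 0 :=
          (O.intersect h0u hj (fun h => hje h.symm) hy0 (O.πmem hj hq)).1
        rw [← O.bj0]
        exact O.tcls_pair h0u hxt hyt
    · have key : ∀ (z : A) (j' : ℕ), j' ≤ O.u * O.K → z ∈ O.tcls j' → z ∈ O.B 0 →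
          z ∈ O.tcls 0 := by
        intro z j' hj' hz hz0
        by_cases hje : j' = 0
        · exact hje ▸ hz
        · exact (O.intersect h0u hj' (fun h => hje h.symm) hz0 (O.tcls_sub hj' hz)).1
      rw [← O.bj0]
      exact O.tcls_pair h0u (key x j₁ hj₁ hx hx0) (key y j₂ hj₂ hy hy0)
    · obtain ⟨-, p, hpB, hcp, hxp⟩ := O.wing_block hn1 hn2 hca1 hxw h0u hx0
      obtain ⟨-, q, hqB, hcq, hyq⟩ := O.wing_block hn1 hn2 hca1 hyw h0u hy0
      rw [O.hπ0] at hxp hyq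
      rw [hxp, hyq]
      exact O.btrans (O.bsymm hcp) hcq
  · rintro ⟨p, q⟩ h
    refine ⟨O.btilde_bj h0u ?_, Set.mem_prod.mpr (O.bmem h)⟩
    rw [O.bj0]; exact h

lemma qi0_FA {i : ℕ} (hi : i ≤ O.u * O.K) : O.qi0 i ∈ O.FA :=
  Or.inl (Or.inr ⟨i, hi, rfl⟩)

lemma TIED {θ : Set (A × A)} (hθ : IsCon O.FA θ) (htr : θ ∩ (O.B 0 ×ˢ O.B 0) = O.β)
    {x y : A} (hxy : (x, y) ∈ θ) {j j' : ℕ} (hj : j ≤ O.u * O.K) (hx : x ∈ O.B j)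
    (hj' : j' ≤ O.u * O.K) (hy : y ∈ O.B j') (hyj : y ∉ O.B j) :
    (x, y) ∈ O.btilde ∨ x ∈ O.tcls j := by
  obtain ⟨cx, hcxB, hcx⟩ := O.πsurj hj hx
  have hq := hθ.2 (O.qi0 j) (O.qi0_FA hj) (x, y) hxy
  have hqx : O.qi0 j x = cx := by
    unfold qi0
    rw [O.e_self hj hx, ← hcx, O.hσ j hj cx hcxB]
  have toβ : ∀ t : A, t ∈ O.B 0 → O.qi0 j y = t → (cx, t) ∈ O.β := by
    intro t htB hqy
    rw [← htr]
    refine ⟨?_, Set.mem_prod.mpr ⟨hcxB, htB⟩⟩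
    have := hq
    rw [hqx, hqy] at this
    exact this
  by_cases hm : j % O.K = 0
  · obtain ⟨n, ⟨hn1, hn2, hjn⟩, -⟩ := O.hT2 j hj (Nat.dvd_of_mod_eq_zero hm)
    by_cases hex : ∀ j'' ∈ O.T n, y ∉ O.B j''
    · have hey : O.e j y = O.π j (O.a 1) := O.heK2 n hn1 hn2 j hjn y hex
      have hqy : O.qi0 j y = O.a 1 := by
        unfold qi0; rw [hey, O.hσ j hj _ O.a1B]
      have hca : (cx, O.a 1) ∈ O.β := toβ _ O.a1B hqy
      right
      rw [← hcx]
      exact O.tcls_intro (by rw [if_pos hm]; exact O.bsymm hca)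
    · push_neg at hex
      obtain ⟨j'', hj''n, hyj''⟩ := hex
      obtain ⟨hj''u, hj''m⟩ := O.TnK hn1 hn2 hj''n
      obtain ⟨cy, hcyB, hcy⟩ := O.πsurj hj''u hyj''
      have hey : O.e j y = O.π j cy := by
        rw [← hcy, O.heK1 n hn1 hn2 j hjn j'' hj''n cy hcyB]
      have hqy : O.qi0 j y = cy := by
        unfold qi0; rw [hey, O.hσ j hj cy hcyB]
      have hcc : (cx, cy) ∈ O.β := toβ _ hcyB hqy
      by_cases hca : (cx, O.a 1) ∈ O.β
      · right
        rw [← hcx]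
        exact O.tcls_intro (by rw [if_pos hm]; exact O.bsymm hca)
      · left
        refine O.btilde_wing hn1 hn2 hcxB hca ?_ ?_
        · exact O.mem_wing.mpr ⟨j, hjn, cx, O.brefl hcxB, hcx⟩
        · exact O.mem_wing.mpr ⟨j'', hj''n, cy, hcc, hcy⟩
  · right
    rcases O.eM_out hj hm hj' hy hyj with hey | hey
    · have hqy : O.qi0 j y = O.a (j % O.K) := by
        unfold qi0
        rw [hey, O.hσ j hj _ (O.hab _ (by omega) (by have := O.modlt j; omega)).1]
      have hca := toβ _ (O.hab _ (by omega) (by have := O.modlt j; omega)).1 hqy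
      rw [← hcx]
      exact O.tcls_intro (by rw [if_neg hm]; exact O.bsymm hca)
    · have hqy : O.qi0 j y = O.b (j % O.K) := by
        unfold qi0
        rw [hey, O.hσ j hj _ (O.hab _ (by omega) (by have := O.modlt j; omega)).2]
      have hcb := toβ _ (O.hab _ (by omega) (by have := O.modlt j; omega)).2 hqy
      rw [← hcx]
      refine O.tcls_intro ?_
      rw [if_neg hm]
      exact O.btrans (O.bgen (by omega) (by have := O.modlt j; omega)) (O.bsymm hcb)

end OvII

end Overalg

open Overalg OvII in
/-- In an overalgebra `𝐀` of the second type, with the classes of `β` other than that of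
`a 1` parametrized by their elements, the relation
`β̃ = β⋆ ∪ ⋃_{r=1}^{m-1} ⋃_{n=1}^{N} (⋃_{ℓ∈𝒯_n} C_r^ℓ)²` is a congruence of `𝐀`, and it
is the largest congruence `θ` of `𝐀` with `θ ∩ (B×B) = β` (that is, `β̃ = β̂`). -/
theorem btildeII_isGreatest {A : Type*} (O : OvII A) :
    IsCon O.FA O.btilde ∧
    IsGreatest {θ : Set (A × A) | IsCon O.FA θ ∧ θ ∩ (O.B 0 ×ˢ O.B 0) = O.β}
      O.btilde := by
  have hcon : IsCon O.FA O.btilde := by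
    refine ⟨⟨O.btilde_refl, fun x y h => O.btilde_symm h,
      fun x y z h1 h2 => O.btilde_trans h1 h2⟩, ?_⟩
    intro g hg p hp
    obtain ⟨x, y⟩ := p
    rcases hg with (⟨f, hf, rfl⟩ | ⟨i, hi, rfl⟩) | ⟨j, hj1, hj2, rfl⟩
    · have h0 := O.E_main (Nat.zero_le _) hp
      rw [O.bj0] at h0
      have hf2 := O.bcongr hf h0
      refine O.btilde_bj (Nat.zero_le _) ?_
      rw [O.bj0]
      exact hf2
    · have h0 := O.E_main hi hp
      obtain ⟨p', q', hp', hq', hpq', he1, he2⟩ := O.bj_elim h0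
      show (O.qi0 i x, O.qi0 i y) ∈ O.btilde
      unfold OvII.qi0
      rw [he1, he2, O.hσ i hi p' hp', O.hσ i hi q' hq']
      refine O.btilde_bj (Nat.zero_le _) ?_
      rw [O.bj0]
      exact hpq'
    · have h0 := O.E_main (Nat.zero_le _) hp
      rw [O.bj0] at h0
      show (O.q0j j x, O.q0j j y) ∈ O.btilde
      unfold OvII.q0j
      exact O.btilde_bj hj2 (O.bj_intro h0)
  refine ⟨hcon, ⟨hcon, O.btilde_trace⟩, ?_⟩
  rintro θ ⟨hθ, htr⟩ ⟨x, y⟩ hxy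
  obtain ⟨j, hj, hx⟩ := O.hA x
  obtain ⟨j', hj', hy⟩ := O.hA y
  by_cases hcom : ∃ i, i ≤ O.u * O.K ∧ x ∈ O.B i ∧ y ∈ O.B i
  · obtain ⟨i, hi, hxi, hyi⟩ := hcom
    obtain ⟨cx, hcxB, hcx⟩ := O.πsurj hi hxi
    obtain ⟨cy, hcyB, hcy⟩ := O.πsurj hi hyi
    have hq' : (O.qi0 i x, O.qi0 i y) ∈ θ := hθ.2 _ (O.qi0_FA hi) (x, y) hxy
    have hqx : O.qi0 i x = cx := by
      unfold OvII.qi0; rw [O.e_self hi hxi, ← hcx, O.hσ i hi cx hcxB]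
    have hqy : O.qi0 i y = cy := by
      unfold OvII.qi0; rw [O.e_self hi hyi, ← hcy, O.hσ i hi cy hcyB]
    rw [hqx, hqy] at hq'
    have hβc : (cx, cy) ∈ O.β := by
      rw [← htr]
      exact ⟨hq', Set.mem_prod.mpr ⟨hcxB, hcyB⟩⟩
    rw [← hcx, ← hcy]
    exact O.btilde_bj hi (O.bj_intro hβc)
  · have hyj : y ∉ O.B j := fun h => hcom ⟨j, hj, hx, h⟩
    have hxj' : x ∉ O.B j' := fun h => hcom ⟨j', hj', h, hy⟩
    rcases O.TIED hθ htr hxy hj hx hj' hy hyj with h | hxt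
    · exact h
    rcases O.TIED hθ htr (hθ.1.2.1 x y hxy) hj' hy hj hx hxj' with h | hyt
    · exact O.btilde_symm h
    · exact O.btilde_tcls hj hj' hxt hyt
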